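/- Let C₀ = {a, b, a², ab⁻¹a⁻¹b⁻¹} ⊆ F₂ and let G be the subgroup of Aut(F₂) generated by t_b (a ↦ ab, b ↦ b), y (a ↦ a⁻¹, b ↦ b), and w₁ (a ↦ a, b ↦ b⁻¹). Then for every element c of the set C (consisting of a^{±1}, a^{±2}, b^{±1}, (ab⁻¹a⁻¹b⁻¹)^{±1}, (ab^n)^{±1}, (a⁻¹b^n)^{±1}, (ab^nab^n)^{±1}, (a⁻¹b^na⁻¹b^n)^{±1}, n ∈ ℤ), there exists φ ∈ G such that φ(c) is conjugate to an element of C₀ or to the inverse of an element of C₀. -/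

import Mathlib

/-- `a` and `b`, the generators of `F₂ = FreeGroup (Fin 2)`. -/
def a : FreeGroup (Fin 2) := FreeGroup.of 0
def b : FreeGroup (Fin 2) := FreeGroup.of 1

/-- The class `C` of words representing simple closed curves on the punctured Klein
bottle, closed under inversion: `a^{±1}, a^{±2}, b^{±1}, (ab⁻¹a⁻¹b⁻¹)^{±1}`, and
`(abⁿ)^{±1}, (a⁻¹bⁿ)^{±1}, (abⁿabⁿ)^{±1}, (a⁻¹bⁿa⁻¹bⁿ)^{±1}` for `n ∈ ℤ`. -/
def C : Set (FreeGroup (Fin 2)) :=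
  {w | w = a ∨ w = a⁻¹ ∨ w = a ^ 2 ∨ w = (a ^ 2)⁻¹ ∨ w = b ∨ w = b⁻¹ ∨
    w = a * b⁻¹ * a⁻¹ * b⁻¹ ∨ w = (a * b⁻¹ * a⁻¹ * b⁻¹)⁻¹ ∨
    (∃ n : ℤ,
      w = a * b ^ n ∨ w = (a * b ^ n)⁻¹ ∨
      w = a⁻¹ * b ^ n ∨ w = (a⁻¹ * b ^ n)⁻¹ ∨
      w = a * b ^ n * a * b ^ n ∨ w = (a * b ^ n * a * b ^ n)⁻¹ ∨
      w = a⁻¹ * b ^ n * a⁻¹ * b ^ n ∨ w = (a⁻¹ * b ^ n * a⁻¹ * b ^ n)⁻¹)}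

lemma conj_aux (x g : FreeGroup (Fin 2)) : IsConj x (g * x * g⁻¹) :=
  isConj_iff.2 ⟨g, rfl⟩

/-- With `C₀ = {a, b, a², ab⁻¹a⁻¹b⁻¹}` and `G ≤ Aut(F₂)` generated by the Dehn twist
`t_b`, the `Y`-homeomorphism `y` and the boundary slide `w₁`, every `c ∈ C` is mapped
by some `φ ∈ G` to an element conjugate to an element of `C₀` or to the inverse of an
element of `C₀`. -/
theorem stmt_17 (tb y w₁ : MulAut (FreeGroup (Fin 2)))
    (htba : tb a = a * b) (htbb : tb b = b)
    (hya : y a = a⁻¹) (hyb : y b = b)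
    (hw₁a : w₁ a = a) (hw₁b : w₁ b = b⁻¹) :
    ∀ c ∈ C, ∃ φ ∈ Subgroup.closure {tb, y, w₁},
      ∃ c₀ ∈ ({a, b, a ^ 2, a * b⁻¹ * a⁻¹ * b⁻¹} : Set (FreeGroup (Fin 2))),
        IsConj c₀ (φ c) ∨ IsConj c₀⁻¹ (φ c) := by
  have htbinvb : tb⁻¹ b = b := by
    conv_lhs => rw [← htbb]
    exact MulAut.inv_apply_self _ tb b
  have htbinva : tb⁻¹ a = a * b⁻¹ := by
    have h : tb (a * b⁻¹) = a := by rw [map_mul, htba, map_inv, htbb]; group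
    conv_lhs => rw [← h]
    exact MulAut.inv_apply_self _ tb _
  have hb : ∀ m : ℤ, (tb ^ m) b = b := by
    intro m
    induction m using Int.induction_on with
    | zero => rfl
    | succ k ih => rw [zpow_add_one, MulAut.mul_apply, htbb, ih]
    | pred k ih => rw [zpow_sub_one, MulAut.mul_apply, htbinvb, ih]
  have ha : ∀ m : ℤ, (tb ^ m) a = a * b ^ m := by
    intro m
    induction m using Int.induction_on with
    | zero => simp
    | succ k ih =>
        rw [zpow_add_one, MulAut.mul_apply, htba, map_mul, ih, hb ↑k]
        group
    | pred k ih =>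
        rw [zpow_sub_one, MulAut.mul_apply, htbinva, map_mul, map_inv, ih, hb (-↑k)]
        group
  have hbpow : ∀ m n : ℤ, (tb ^ m) (b ^ n) = b ^ n := by
    intro m n; rw [map_zpow, hb]
  have hmem : ∀ m : ℤ, tb ^ m ∈ Subgroup.closure {tb, y, w₁} := fun m =>
    zpow_mem (Subgroup.subset_closure (by simp)) m
  have hone : (1 : MulAut (FreeGroup (Fin 2))) ∈ Subgroup.closure {tb, y, w₁} :=
    one_mem _
  intro c hc
  rcases hc with h | h | h | h | h | h | h | h | ⟨n, h | h | h | h | h | h | h | h⟩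
  · exact ⟨1, hone, a, by simp, Or.inl (by rw [h, MulAut.one_apply])⟩
  · exact ⟨1, hone, a, by simp, Or.inr (by rw [h, MulAut.one_apply])⟩
  · exact ⟨1, hone, a ^ 2, by simp, Or.inl (by rw [h, MulAut.one_apply])⟩
  · exact ⟨1, hone, a ^ 2, by simp, Or.inr (by rw [h, MulAut.one_apply])⟩
  · exact ⟨1, hone, b, by simp, Or.inl (by rw [h, MulAut.one_apply])⟩
  · exact ⟨1, hone, b, by simp, Or.inr (by rw [h, MulAut.one_apply])⟩
  · exact ⟨1, hone, a * b⁻¹ * a⁻¹ * b⁻¹, by simp, Or.inl (by rw [h, MulAut.one_apply])⟩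
  · exact ⟨1, hone, a * b⁻¹ * a⁻¹ * b⁻¹, by simp, Or.inr (by rw [h, MulAut.one_apply])⟩
  · refine ⟨tb ^ (-n), hmem _, a, by simp, Or.inl ?_⟩
    have hφ : (tb ^ (-n)) c = a := by
      rw [h, map_mul, ha, hbpow]; group
    rw [hφ]
  · refine ⟨tb ^ (-n), hmem _, a, by simp, Or.inr ?_⟩
    have hφ : (tb ^ (-n)) c = a⁻¹ := by
      rw [h, map_inv, map_mul, ha, hbpow]; group
    rw [hφ]
  · refine ⟨tb ^ n, hmem _, a, by simp, Or.inr ?_⟩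
    have hφ : (tb ^ n) c = b ^ (-n) * a⁻¹ * (b ^ (-n))⁻¹ := by
      rw [h, map_mul, map_inv, ha, hbpow]; group
    rw [hφ]; exact isConj_iff.2 ⟨b ^ (-n), by group⟩
  · refine ⟨tb ^ n, hmem _, a, by simp, Or.inl ?_⟩
    have hφ : (tb ^ n) c = b ^ (-n) * a * (b ^ (-n))⁻¹ := by
      rw [h, map_inv, map_mul, map_inv, ha, hbpow]; group
    rw [hφ]; exact isConj_iff.2 ⟨b ^ (-n), by group⟩
  · refine ⟨tb ^ (-n), hmem _, a ^ 2, by simp, Or.inl ?_⟩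
    have hφ : (tb ^ (-n)) c = a ^ 2 := by
      rw [h, map_mul, map_mul, map_mul, ha, hbpow, pow_two]; group
    rw [hφ]
  · refine ⟨tb ^ (-n), hmem _, a ^ 2, by simp, Or.inr ?_⟩
    have hφ : (tb ^ (-n)) c = (a ^ 2)⁻¹ := by
      rw [h, map_inv, map_mul, map_mul, map_mul, ha, hbpow, pow_two]; group
    rw [hφ]
  · refine ⟨tb ^ n, hmem _, a ^ 2, by simp, Or.inr ?_⟩
    have hφ : (tb ^ n) c = (b ^ n)⁻¹ * (a ^ 2)⁻¹ * ((b ^ n)⁻¹)⁻¹ := by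
      rw [h, map_mul, map_mul, map_mul, map_inv, ha, hbpow, pow_two]; group
    rw [hφ]; exact conj_aux _ _
  · refine ⟨tb ^ n, hmem _, a ^ 2, by simp, Or.inl ?_⟩
    have hφ : (tb ^ n) c = (b ^ n)⁻¹ * a ^ 2 * ((b ^ n)⁻¹)⁻¹ := by
      rw [h, map_inv, map_mul, map_mul, map_mul, map_inv, ha, hbpow]; group
    rw [hφ]; exact conj_aux _ _
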